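/- Let N, H ≥ 1 be integers, C_φ > 0, and let φ_{n,h} ∈ ℝ^d for n ∈ {1,…,N}, h ∈ {1,…,H} be vectors with ‖φ_{n,h}‖₂² ≤ C_φ · d. Define A_1 = I and A_{n+1} = A_n + ∑_{h=1}^{H} φ_{n,h} φ_{n,h}ᵀ, and set w_{n,h}² = φ_{n,h}ᵀ A_n^{-1} φ_{n,h}. Then ∑_{n=1}^{N} ∑_{h=1}^{H} min(1, w_{n,h}²) ≤ 2 H · ln det(A_{N+1}) ≤ 2 H d · ln(N·H·C_φ + 1). -/

import Mathlib

open Matrix Finset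




lemma aux_psd_vecMulVec {d : ℕ} (v : Fin d → ℝ) : (vecMulVec v v).PosSemidef := by
  rw [vecMulVec_eq Unit]
  have h : replicateCol Unit v = (replicateRow Unit v)ᴴ := by
    ext i j; simp [Matrix.replicateCol, Matrix.replicateRow]
  rw [h]
  exact posSemidef_conjTranspose_mul_self _

lemma aux_psd_sum {d : ℕ} (s : Finset ℕ) (f : ℕ → Fin d → ℝ) :
    (∑ h ∈ s, vecMulVec (f h) (f h)).PosSemidef :=
  Finset.sum_induction _ _ (fun _ _ ha hb => ha.add hb) Matrix.PosSemidef.zero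
    (fun h _ => aux_psd_vecMulVec (f h))

lemma aux_det_one_add {d : ℕ} {M : Matrix (Fin d) (Fin d) ℝ} (hM : M.PosSemidef) :
    1 ≤ (1 + M).det := by
  have hH := hM.1
  set U : Matrix (Fin d) (Fin d) ℝ := (hH.eigenvectorUnitary : Matrix (Fin d) (Fin d) ℝ) with hUdef
  set D : Matrix (Fin d) (Fin d) ℝ := diagonal (RCLike.ofReal ∘ hH.eigenvalues) with hDdef
  have hsp : M = U * D * star U := hH.spectral_theorem
  have hU : U * star U = 1 := mem_unitaryGroup_iff.mp (hH.eigenvectorUnitary).2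
  have h1 : (1 + M) = U * (1 + D) * star U := by
    rw [mul_add, add_mul, mul_one, hU, ← hsp]
  have h2 : (1 + M).det = det U * det (star U) * det (1 + D) := by
    rw [h1, det_mul, det_mul]; ring
  rw [← det_mul, hU, det_one, one_mul] at h2
  have h3 : (1 + D).det = ∏ i, (1 + hH.eigenvalues i) := by
    rw [hDdef, ← diagonal_one, diagonal_add, det_diagonal]
    simp [RCLike.ofReal_real_eq_id]
  rw [h2, h3]
  calc (1:ℝ) = ∏ _i : Fin d, 1 := by simp
  _ ≤ ∏ i, (1 + hH.eigenvalues i) := by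
      apply Finset.prod_le_prod (by simp) (fun i _ => by linarith [hM.eigenvalues_nonneg i])

lemma aux_det_mono {d : ℕ} {B C : Matrix (Fin d) (Fin d) ℝ} (hB : B.PosDef) (hC : C.PosSemidef) :
    B.det ≤ (B + C).det := by
  obtain ⟨X, rfl⟩ : ∃ X : Matrix (Fin d) (Fin d) ℝ, C = Xᴴ * X := by
    open scoped MatrixOrder Matrix.Norms.L2Operator in
    exact CStarAlgebra.nonneg_iff_eq_star_mul_self.mp hC.nonneg
  have hBdet : IsUnit B.det := isUnit_iff_ne_zero.mpr hB.det_pos.ne'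
  have h1 : B + Xᴴ * X = B * (1 + B⁻¹ * Xᴴ * X) := by
    rw [mul_add, mul_one, ← mul_assoc, ← mul_assoc, Matrix.mul_nonsing_inv _ hBdet, one_mul]
  have h3 : (1:ℝ) ≤ (1 + B⁻¹ * Xᴴ * X).det := by
    rw [Matrix.det_one_add_mul_comm, ← Matrix.mul_assoc]
    exact aux_det_one_add (hB.inv.posSemidef.mul_mul_conjTranspose_same X)
  rw [h1, det_mul]
  exact le_mul_of_one_le_right hB.det_pos.le h3

lemma aux_det_rank_one {d : ℕ} {B : Matrix (Fin d) (Fin d) ℝ} (hB : B.PosDef) (v : Fin d → ℝ) :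
    (B + vecMulVec v v).det = B.det * (1 + v ⬝ᵥ B⁻¹ *ᵥ v) := by
  have hBdet : IsUnit B.det := isUnit_iff_ne_zero.mpr hB.det_pos.ne'
  have h1 : B + vecMulVec v v = B * (1 + replicateCol Unit (B⁻¹ *ᵥ v) * replicateRow Unit v) := by
    rw [mul_add, mul_one, replicateCol_mulVec, ← Matrix.mul_assoc, ← Matrix.mul_assoc,
      Matrix.mul_nonsing_inv _ hBdet, Matrix.one_mul, vecMulVec_eq Unit]
  rw [h1, det_mul, det_one_add_replicateCol_mul_replicateRow]

lemma aux_min_le_log {x : ℝ} (hx : 0 ≤ x) : min 1 x ≤ 2 * Real.log (1 + x) := by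
  rcases le_total 1 x with h | h
  · rw [min_eq_left h]
    have h2 : Real.log 2 ≤ Real.log (1 + x) :=
      Real.log_le_log (by norm_num) (by linarith)
    nlinarith [Real.log_two_gt_d9]
  · rw [min_eq_right h]
    have hpos : (0:ℝ) < 1 + x := by linarith
    have h1 : Real.log (1 + x)⁻¹ ≤ (1 + x)⁻¹ - 1 :=
      Real.log_le_sub_one_of_pos (by positivity)
    rw [Real.log_inv] at h1
    have h2 : x / (1 + x) ≤ Real.log (1 + x) := by
      have : 1 - (1 + x)⁻¹ = x / (1 + x) := by field_simp; ring
      linarith [this ▸ (by linarith : 1 - (1 + x)⁻¹ ≤ Real.log (1 + x))]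
    have h3 : x / 2 ≤ x / (1 + x) := by
      rw [div_le_div_iff₀ (by norm_num) hpos]; nlinarith
    linarith



lemma aux_trace_eq_sum_eig {d : ℕ} {M : Matrix (Fin d) (Fin d) ℝ} (hM : M.IsHermitian) :
    M.trace = ∑ i, hM.eigenvalues i := by
  have hU : star (hM.eigenvectorUnitary : Matrix (Fin d) (Fin d) ℝ) *
      (hM.eigenvectorUnitary : Matrix (Fin d) (Fin d) ℝ) = 1 :=
    mem_unitaryGroup_iff'.mp (hM.eigenvectorUnitary).2
  conv_lhs => rw [hM.spectral_theorem, Unitary.conjStarAlgAut_apply]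
  rw [trace_mul_cycle, hU, Matrix.one_mul, trace_diagonal]
  simp [RCLike.ofReal_real_eq_id]


/-- Lemma 6 (episode-batched elliptical-potential bound): with
`A_1 = I`, `A_{n+1} = A_n + ∑_{h=1}^H φ_{n,h} φ_{n,h}ᵀ` and
`w_{n,h}² = φ_{n,h}ᵀ A_n⁻¹ φ_{n,h}`,
`∑_{n=1}^N ∑_{h=1}^H min(1, w_{n,h}²) ≤ 2H ln det(A_{N+1}) ≤ 2Hd ln(NHCφ + 1)`. -/
theorem episode_batched_elliptical_potential {d : ℕ} (N H : ℕ)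
    (hN : 1 ≤ N) (hH : 1 ≤ H) (Cφ : ℝ) (hCφ : 0 < Cφ)
    (φ : ℕ → ℕ → Fin d → ℝ)
    (hφ : ∀ n ∈ Finset.Icc 1 N, ∀ h ∈ Finset.Icc 1 H, ∑ i, (φ n h i) ^ 2 ≤ Cφ * d)
    (A : ℕ → Matrix (Fin d) (Fin d) ℝ)
    (hA1 : A 1 = 1)
    (hArec : ∀ n, 1 ≤ n →
      A (n + 1) = A n + ∑ h ∈ Finset.Icc 1 H, vecMulVec (φ n h) (φ n h))
    (w : ℕ → ℕ → ℝ)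
    (hw : ∀ n h, w n h = φ n h ⬝ᵥ ((A n)⁻¹ *ᵥ φ n h)) :
    (∑ n ∈ Finset.Icc 1 N, ∑ h ∈ Finset.Icc 1 H, min 1 (w n h)) ≤
        2 * H * Real.log (A (N + 1)).det ∧
      2 * H * Real.log (A (N + 1)).det ≤ 2 * H * d * Real.log (N * H * Cφ + 1) := by
  classical
  have hPD : ∀ n, 1 ≤ n → (A n).PosDef := by
    intro n hn
    induction n, hn using Nat.le_induction with
    | base => rw [hA1]; exact Matrix.PosDef.one
    | succ n hn ih =>
      rw [hArec n hn]
      exact ih.add_posSemidef (aux_psd_sum _ _)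
  have hdetpos : ∀ n, 1 ≤ n → 0 < (A n).det := fun n hn => (hPD n hn).det_pos
  have hwnn : ∀ n, 1 ≤ n → ∀ h, 0 ≤ w n h := by
    intro n hn h
    rw [hw]
    have := ((hPD n hn).inv).posSemidef.dotProduct_mulVec_nonneg (φ n h)
    simpa using this
  have hstep : ∀ n, 1 ≤ n → ∀ h ∈ Finset.Icc 1 H,
      Real.log (1 + w n h) ≤ Real.log (A (n+1)).det - Real.log (A n).det := by
    intro n hn h hh
    have hdet1 : (A n).det * (1 + w n h) ≤ (A (n+1)).det := by
      have hsplit : A (n+1) = (A n + vecMulVec (φ n h) (φ n h)) +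
          ∑ h' ∈ (Finset.Icc 1 H).erase h, vecMulVec (φ n h') (φ n h') := by
        rw [hArec n hn, ← Finset.add_sum_erase _ _ hh, add_assoc]
      rw [hsplit]
      have h1 : ((A n) + vecMulVec (φ n h) (φ n h)).PosDef :=
        (hPD n hn).add_posSemidef (aux_psd_vecMulVec _)
      calc (A n).det * (1 + w n h) = ((A n) + vecMulVec (φ n h) (φ n h)).det := by
            rw [aux_det_rank_one (hPD n hn), hw]
        _ ≤ _ := aux_det_mono h1 (aux_psd_sum _ _)
    have h1w : (0:ℝ) < 1 + w n h := by linarith [hwnn n hn h]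
    have hlog := Real.log_le_log (mul_pos (hdetpos n hn) h1w) hdet1
    rw [Real.log_mul (hdetpos n hn).ne' h1w.ne'] at hlog
    linarith
  have hepisode : ∀ n, 1 ≤ n →
      ∑ h ∈ Finset.Icc 1 H, min 1 (w n h) ≤
        2 * H * (Real.log (A (n+1)).det - Real.log (A n).det) := by
    intro n hn
    calc ∑ h ∈ Finset.Icc 1 H, min 1 (w n h)
        ≤ ∑ h ∈ Finset.Icc 1 H, 2 * Real.log (1 + w n h) :=
          Finset.sum_le_sum (fun h _ => aux_min_le_log (hwnn n hn h))
      _ ≤ ∑ _h ∈ Finset.Icc 1 H, 2 * (Real.log (A (n+1)).det - Real.log (A n).det) :=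
          Finset.sum_le_sum (fun h hh => by linarith [hstep n hn h hh])
      _ = 2 * H * (Real.log (A (n+1)).det - Real.log (A n).det) := by
          rw [Finset.sum_const, Nat.card_Icc]
          simp [nsmul_eq_mul]
          ring
  have hpart1 : ∀ M : ℕ,
      (∑ n ∈ Finset.Icc 1 M, ∑ h ∈ Finset.Icc 1 H, min 1 (w n h)) ≤
        2 * H * Real.log (A (M+1)).det := by
    intro M
    induction M with
    | zero => simp [hA1]
    | succ M ih =>
      rw [Finset.sum_Icc_succ_top (Nat.le_add_left 1 M)]
      have := hepisode (M+1) (Nat.le_add_left 1 M)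
      linarith
  have htr : ∀ M, M ≤ N → (A (M+1)).trace ≤ d + M * H * Cφ * d := by
    intro M
    induction M with
    | zero =>
      intro _
      simp [hA1, Matrix.trace_one]
    | succ M ih =>
      intro hMN
      have hM : M ≤ N := Nat.le_of_succ_le hMN
      rw [hArec (M+1) (Nat.le_add_left 1 M), Matrix.trace_add, Matrix.trace_sum]
      have hsum : ∑ h ∈ Finset.Icc 1 H, (vecMulVec (φ (M+1) h) (φ (M+1) h)).trace
          ≤ H * (Cφ * d) := by
        calc ∑ h ∈ Finset.Icc 1 H, (vecMulVec (φ (M+1) h) (φ (M+1) h)).trace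
            ≤ ∑ _h ∈ Finset.Icc 1 H, Cφ * d := by
              apply Finset.sum_le_sum
              intro h hh
              have heq : (vecMulVec (φ (M+1) h) (φ (M+1) h)).trace
                  = ∑ i, (φ (M+1) h i)^2 := by
                simp [Matrix.trace, Matrix.diag, vecMulVec_apply, sq]
              rw [heq]
              exact hφ (M+1) (Finset.mem_Icc.mpr ⟨Nat.le_add_left 1 M, hMN⟩) h hh
          _ = H * (Cφ * d) := by
              rw [Finset.sum_const, Nat.card_Icc]
              simp [nsmul_eq_mul]
      have hih := ih hM
      push_cast at hih ⊢
      linarith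
  have hdetN : 0 < (A (N+1)).det := hdetpos _ (Nat.le_add_left 1 N)
  have hbase : (0:ℝ) < N * H * Cφ + 1 := by
    have : (0:ℝ) < (N:ℝ) * H * Cφ := by
      have h1 : (0:ℝ) < (N:ℝ) := by exact_mod_cast hN
      have h2 : (0:ℝ) < (H:ℝ) := by exact_mod_cast hH
      positivity
    linarith
  have hlogdet : Real.log (A (N+1)).det ≤ d * Real.log (N * H * Cφ + 1) := by
    rcases Nat.eq_zero_or_pos d with hd | hd
    · subst hd
      rw [Matrix.det_isEmpty, Real.log_one]
      simp
    · have hd' : (0:ℝ) < d := by exact_mod_cast hd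
      have P := hPD (N+1) (Nat.le_add_left 1 N)
      have hHerm := P.isHermitian
      set lam := hHerm.eigenvalues with hlam
      have hlamnn : ∀ i, 0 ≤ lam i := P.posSemidef.eigenvalues_nonneg
      have hdet_eq : (A (N+1)).det = ∏ i, lam i := by
        have := hHerm.det_eq_prod_eigenvalues
        simpa [RCLike.ofReal_real_eq_id] using this
      have htr_eq : (A (N+1)).trace = ∑ i, lam i := aux_trace_eq_sum_eig hHerm
      have hw1 : ∑ _i : Fin d, ((d:ℝ)⁻¹) = 1 := by
        rw [Finset.sum_const]
        simp [nsmul_eq_mul]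
        field_simp
      have hgm := Real.geom_mean_le_arith_mean_weighted Finset.univ
        (fun _ => (d:ℝ)⁻¹) lam (fun i _ => by positivity) hw1 (fun i _ => hlamnn i)
      have hrhs : ∑ i, (d:ℝ)⁻¹ * lam i ≤ N * H * Cφ + 1 := by
        have h1 : ∑ i, (d:ℝ)⁻¹ * lam i = (d:ℝ)⁻¹ * (A (N+1)).trace := by
          rw [htr_eq, Finset.mul_sum]
        rw [h1, inv_mul_le_iff₀ hd']
        have := htr N le_rfl
        nlinarith
      have hprod : (A (N+1)).det = (∏ i, lam i ^ ((d:ℝ)⁻¹)) ^ (d:ℕ) := by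
        rw [← Finset.prod_pow, hdet_eq]
        apply Finset.prod_congr rfl
        intro i _
        rw [← Real.rpow_natCast (lam i ^ ((d:ℝ)⁻¹)) d, ← Real.rpow_mul (hlamnn i),
          inv_mul_cancel₀ hd'.ne', Real.rpow_one]
      have hdetle : (A (N+1)).det ≤ (N * H * Cφ + 1) ^ (d:ℕ) := by
        rw [hprod]
        apply pow_le_pow_left₀
        · exact Finset.prod_nonneg fun i _ => Real.rpow_nonneg (hlamnn i) _
        · exact hgm.trans hrhs
      have := Real.log_le_log hdetN hdetle
      rwa [Real.log_pow] at this
  refine ⟨hpart1 N, ?_⟩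
  have h2H : (0:ℝ) ≤ 2 * H := by positivity
  calc 2 * H * Real.log (A (N+1)).det
      ≤ 2 * H * (d * Real.log (N * H * Cφ + 1)) := mul_le_mul_of_nonneg_left hlogdet h2H
    _ = 2 * H * d * Real.log (N * H * Cφ + 1) := by ring
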